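/- Let p > 13 be a prime with p ≡ 4 (mod 5). The polynomial G(λ) := G^{((3p-7)/10)}(3/5, 7/10, 11/10 | λ) over F_p has no multiple roots in the algebraic closure of F_p. -/

import Mathlib

/-- The Pochhammer symbol `(x;ℓ) = x(x+1)⋯(x+ℓ-1)` in a field `K`. -/
noncomputable def poch {K : Type*} [Field K] (x : K) (ℓ : ℕ) : K :=
  ∏ i ∈ Finset.range ℓ, (x + (i : K))

/-- The truncated Gaussian hypergeometric series `G^(d)(a,b,c | z)` as a
polynomial in `z`: `Σ_{ℓ=0}^d ((a;ℓ)(b;ℓ))/((c;ℓ)(1;ℓ)) z^ℓ`. -/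
noncomputable def Gpoly {K : Type*} [Field K] (d : ℕ) (a b c : K) : Polynomial K :=
  ∑ ℓ ∈ Finset.range (d + 1),
    Polynomial.C (poch a ℓ * poch b ℓ / (poch c ℓ * poch 1 ℓ)) * Polynomial.X ^ ℓ

open Polynomial

lemma poch_succ {K : Type*} [Field K] (x : K) (n : ℕ) :
    poch x (n + 1) = poch x n * (x + n) := by
  simp [poch, Finset.prod_range_succ]

lemma Gpoly_coeff {K : Type*} [Field K] (d : ℕ) (a b c : K) (n : ℕ) :
    (Gpoly d a b c).coeff n =
      if n ≤ d then poch a n * poch b n / (poch c n * poch 1 n) else 0 := by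
  unfold Gpoly
  rw [Polynomial.finset_sum_coeff]
  simp only [Polynomial.coeff_C_mul, Polynomial.coeff_X_pow, mul_ite, mul_one, mul_zero]
  rw [Finset.sum_ite_eq (Finset.range (d+1)) n]
  simp [Nat.lt_succ_iff]

lemma ode_of_rec {K : Type*} [CommRing K] (P : Polynomial K)
    (h : ∀ n : ℕ, ((n : K) + 1) * (50 * (n : K) + 55) * P.coeff (n + 1)
        = (5 * (n : K) + 3) * (10 * (n : K) + 7) * P.coeff n) :
    X * (1 - X) * (C 50 * derivative (derivative P)) + (C 55 - C 115 * X) * derivative P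
      = C 21 * P := by
  have expand : X * (1 - X) * (C 50 * derivative (derivative P)) + (C 55 - C 115 * X) * derivative P
      = C 50 * (X * derivative (derivative P)) - C 50 * (X * (X * derivative (derivative P)))
        + C 55 * derivative P - C 115 * (X * derivative P) := by ring
  rw [expand]
  ext n
  match n with
  | 0 =>
    simp only [coeff_sub, coeff_add, coeff_C_mul, Polynomial.mul_coeff_zero, coeff_X_zero,
      coeff_C_zero, coeff_derivative, zero_mul, mul_zero]
    have h0 := h 0
    push_cast at h0 ⊢
    linear_combination h0
  | 1 =>
    simp only [coeff_sub, coeff_add, coeff_C_mul, Polynomial.coeff_X_mul, coeff_derivative,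
      Polynomial.mul_coeff_zero, coeff_X_zero, coeff_C_zero, zero_mul, mul_zero]
    have h1 := h 1
    have h0 := h 0
    push_cast at h0 h1 ⊢
    linear_combination h1
  | (n+2) =>
    simp only [coeff_sub, coeff_add, coeff_C_mul, Polynomial.coeff_X_mul, coeff_derivative]
    have hn := h (n+2)
    push_cast at hn ⊢
    linear_combination hn

lemma facts_mod (p : ℕ) [Fact p.Prime] (hp13 : 13 < p) (hp5 : p % 5 = 4) : p % 10 = 9 := by
  have hpp : p.Prime := Fact.out
  have h2 : p % 2 = 1 := (Nat.Prime.mod_two_eq_one_iff_ne_two hpp).mpr (by omega)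
  omega

lemma ten_ne (p : ℕ) [Fact p.Prime] (hp13 : 13 < p) : (10 : ZMod p) ≠ 0 := by
  have : ((10:ℕ) : ZMod p) ≠ 0 := by
    rw [Ne, ZMod.natCast_eq_zero_iff]
    intro h
    have := Nat.le_of_dvd (by norm_num) h
    omega
  simpa using this

lemma five_ne (p : ℕ) [Fact p.Prime] (hp13 : 13 < p) : (5 : ZMod p) ≠ 0 := by
  have : ((5:ℕ) : ZMod p) ≠ 0 := by
    rw [Ne, ZMod.natCast_eq_zero_iff]
    intro h
    have := Nat.le_of_dvd (by norm_num) h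
    omega
  simpa using this

lemma c_factor_ne (p : ℕ) [Fact p.Prime] (hp13 : 13 < p) (hp5 : p % 5 = 4)
    (i : ℕ) (hi : i ≤ (3 * p - 7) / 10) : ((11 : ZMod p) / 10 + i) ≠ 0 := by
  have h9 := facts_mod p hp13 hp5
  have h10d : 10 * ((3 * p - 7) / 10) = 3 * p - 7 := by omega
  have h10 := ten_ne p hp13
  intro h
  have h2 : ((10 * i + 11 : ℕ) : ZMod p) = 0 := by
    push_cast
    have := congrArg (fun z => z * 10) h
    simp only [zero_mul] at this
    field_simp at this
    linear_combination this
  rw [ZMod.natCast_eq_zero_iff] at h2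
  obtain ⟨k, hk⟩ := h2
  have hk4 : k < 4 := by
    by_contra hge
    push_neg at hge
    have h1 : p * 4 ≤ p * k := Nat.mul_le_mul_left p hge
    omega
  interval_cases k <;> omega

lemma one_factor_ne (p : ℕ) [Fact p.Prime] (hp13 : 13 < p) (hp5 : p % 5 = 4)
    (i : ℕ) (hi : i ≤ (3 * p - 7) / 10) : ((1 : ZMod p) + i) ≠ 0 := by
  have h9 := facts_mod p hp13 hp5
  have h10d : 10 * ((3 * p - 7) / 10) = 3 * p - 7 := by omega
  intro h
  have h2 : ((i + 1 : ℕ) : ZMod p) = 0 := by push_cast; linear_combination h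
  rw [ZMod.natCast_eq_zero_iff] at h2
  have := Nat.le_of_dvd (by omega) h2
  omega

lemma poch_c_ne (p : ℕ) [Fact p.Prime] (hp13 : 13 < p) (hp5 : p % 5 = 4)
    (n : ℕ) (hn : n ≤ (3 * p - 7) / 10) : poch ((11 : ZMod p) / 10) n ≠ 0 := by
  rw [poch, Finset.prod_ne_zero_iff]
  intro i hi
  exact c_factor_ne p hp13 hp5 i (by simp at hi; omega)

lemma poch_one_ne (p : ℕ) [Fact p.Prime] (hp13 : 13 < p) (hp5 : p % 5 = 4)
    (n : ℕ) (hn : n ≤ (3 * p - 7) / 10) : poch (1 : ZMod p) n ≠ 0 := by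
  rw [poch, Finset.prod_ne_zero_iff]
  intro i hi
  exact one_factor_ne p hp13 hp5 i (by simp at hi; omega)

lemma Gpoly_rec (p : ℕ) [Fact p.Prime] (hp13 : 13 < p) (hp5 : p % 5 = 4) (n : ℕ) :
    ((n : ZMod p) + 1) * (50 * (n : ZMod p) + 55) *
        (Gpoly ((3*p-7)/10) ((3 : ZMod p)/5) ((7 : ZMod p)/10) ((11 : ZMod p)/10)).coeff (n+1)
      = (5 * (n : ZMod p) + 3) * (10 * (n : ZMod p) + 7) *
        (Gpoly ((3*p-7)/10) ((3 : ZMod p)/5) ((7 : ZMod p)/10) ((11 : ZMod p)/10)).coeff n := by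
  have h9 := facts_mod p hp13 hp5
  set d := (3*p-7)/10 with hd
  have h10d : 10 * d = 3 * p - 7 := by omega
  have h10 := ten_ne p hp13
  have h5 := five_ne p hp13
  rcases lt_trichotomy n d with hlt | heq | hgt
  · rw [Gpoly_coeff, Gpoly_coeff, if_pos (by omega), if_pos (by omega),
      poch_succ, poch_succ, poch_succ, poch_succ]
    have hPc := poch_c_ne p hp13 hp5 n (by omega)
    have hP1 := poch_one_ne p hp13 hp5 n (by omega)
    have hc := c_factor_ne p hp13 hp5 n (by omega)
    have h1 := one_factor_ne p hp13 hp5 n (by omega)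
    have hD1 : poch ((11 : ZMod p)/10) n * ((11 : ZMod p)/10 + n) * (poch 1 n * (1 + (n : ZMod p))) ≠ 0 :=
      mul_ne_zero (mul_ne_zero hPc hc) (mul_ne_zero hP1 h1)
    have hD2 : poch ((11 : ZMod p)/10) n * poch 1 n ≠ 0 := mul_ne_zero hPc hP1
    rw [← mul_div_assoc, ← mul_div_assoc, div_eq_div_iff hD1 hD2]
    field_simp
    ring
  · rw [Gpoly_coeff, Gpoly_coeff, if_neg (by omega), if_pos (by omega)]
    have hz : 10 * (n : ZMod p) + 7 = 0 := by
      have : ((10 * n + 7 : ℕ) : ZMod p) = ((3 * p : ℕ) : ZMod p) := by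
        rw [show 10 * n + 7 = 3 * p by omega]
      push_cast at this
      simp at this
      linear_combination this
    rw [hz]
    ring
  · rw [Gpoly_coeff, Gpoly_coeff, if_neg (by omega), if_neg (by omega)]
    ring

theorem Gpoly_no_multiple_roots
    (p : ℕ) [Fact p.Prime] (hp13 : 13 < p) (hp5 : p % 5 = 4) :
    ∀ x : AlgebraicClosure (ZMod p),
      (Polynomial.map (algebraMap (ZMod p) (AlgebraicClosure (ZMod p)))
          (Gpoly ((3 * p - 7) / 10) ((3 : ZMod p) / 5) ((7 : ZMod p) / 10)
            ((11 : ZMod p) / 10))).rootMultiplicity x ≤ 1 := by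
  have hpp : p.Prime := Fact.out
  have h9 := facts_mod p hp13 hp5
  set F := AlgebraicClosure (ZMod p) with hF
  set φ := algebraMap (ZMod p) F with hφ
  set d := (3 * p - 7) / 10 with hd
  set G : Polynomial (ZMod p) := Gpoly d ((3:ZMod p)/5) ((7:ZMod p)/10) ((11:ZMod p)/10) with hG
  set Gm : Polynomial F := G.map φ with hGm
  intro x
  by_contra hmult
  push_neg at hmult
  have h10d : 10 * d = 3 * p - 7 := by omega
  have hφinj : Function.Injective φ := (algebraMap (ZMod p) F).injective
  -- basic nonvanishing of casts in F
  have hcast : ∀ j : ℕ, 0 < j → j < p → (j : F) ≠ 0 := by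
    intro j hj0 hjp
    rw [show ((j : F)) = φ ((j : ZMod p)) by simp [map_natCast], Ne]
    rw [← map_zero φ]
    intro h
    have := hφinj h
    rw [ZMod.natCast_eq_zero_iff] at this
    have := Nat.le_of_dvd hj0 this
    omega
  have h2F : (2 : F) ≠ 0 := by
    have := hcast 2 (by norm_num) (by omega); simpa using this
  have h5F : (5 : F) ≠ 0 := by
    have := hcast 5 (by norm_num) (by omega); simpa using this
  have h50F : (50 : F) ≠ 0 := by
    have : (50 : F) = 2 * 5 * 5 := by norm_num
    rw [this]
    exact mul_ne_zero (mul_ne_zero h2F h5F) h5F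
  -- G nonzero
  have hG0coeff : Gm.coeff 0 = 1 := by
    rw [hGm, Polynomial.coeff_map, hG, Gpoly_coeff]
    simp [poch]
  have hGm0 : Gm ≠ 0 := fun h => by simp [h] at hG0coeff
  -- the hypergeometric ODE over F
  have hodeK := ode_of_rec G (Gpoly_rec p hp13 hp5)
  have hode : X * (1 - X) * (C (50:F) * derivative (derivative Gm))
      + (C 55 - C 115 * X) * derivative Gm = C 21 * Gm := by
    rw [hGm]
    have := congrArg (Polynomial.map φ) hodeK
    simpa [Polynomial.derivative_map, map_ofNat] using this
  -- multiplicity setup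
  set m := Gm.rootMultiplicity x with hm
  obtain ⟨k, hk⟩ : ∃ k, m = k + 2 := ⟨m - 2, by omega⟩
  set u := Gm /ₘ (X - C x) ^ m with hu
  have hfact : (X - C x) ^ m * u = Gm := Gm.pow_mul_divByMonic_rootMultiplicity_eq x
  have hux : u.eval x ≠ 0 := Polynomial.eval_divByMonic_pow_rootMultiplicity_ne_zero x hGm0
  rw [hk] at hfact
  -- m ≤ d
  have hmd : m ≤ d := by
    have hdvd : (X - C x) ^ m ∣ Gm := Gm.pow_rootMultiplicity_dvd x
    have h1 := Polynomial.natDegree_le_of_dvd hdvd hGm0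
    have h2 : ((X - C x : Polynomial F) ^ m).natDegree = m := by
      simp [Polynomial.natDegree_pow]
    have h3 : Gm.natDegree ≤ G.natDegree := Polynomial.natDegree_map_le
    have h4 : G.natDegree ≤ d := by
      rw [Polynomial.natDegree_le_iff_coeff_eq_zero]
      intro N hN
      rw [hG, Gpoly_coeff, if_neg (by omega)]
    omega
  have hdp : d < p := by omega
  -- derivative computations
  set v : Polynomial F := ((k : Polynomial F) + 2) * u + (X - C x) * derivative u with hv
  set w : Polynomial F := ((k : Polynomial F) + 1) * v + (X - C x) * derivative v with hw
  have hG' : derivative Gm = (X - C x)^(k+1) * v := by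
    rw [← hfact, derivative_mul, derivative_pow, derivative_sub, derivative_X, derivative_C, hv]
    simp only [show k+2-1 = k+1 from rfl, map_natCast]
    push_cast
    ring
  have hG'' : derivative (derivative Gm) = (X - C x)^k * w := by
    rw [hG', derivative_mul, derivative_pow, derivative_sub, derivative_X, derivative_C, hw]
    simp only [show k+1-1 = k from rfl, map_natCast]
    push_cast
    ring
  set B : Polynomial F := X * (1-X) * (C 50 * w) + (C 55 - C 115 * X) * ((X - C x) * v)
      - C 21 * ((X - C x)^2 * u) with hB
  have hXc : (X - C x : Polynomial F) ≠ 0 := X_sub_C_ne_zero x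
  have hBzero : B = 0 := by
    have h2 : (X - C x)^k * B = 0 := by
      rw [hB]
      linear_combination (-(X * (1-X) * C (50:F))) * hG'' + (-(C (55:F) - C 115 * X)) * hG'
        + (-(C (21:F))) * hfact + hode
    rcases mul_eq_zero.mp h2 with h | h
    · exact absurd h (pow_ne_zero _ hXc)
    · exact h
  -- evaluate the bracket at x
  have hvx : v.eval x = ((k:F) + 2) * u.eval x := by
    rw [hv]; simp
  have hwx : w.eval x = ((k:F) + 1) * v.eval x := by
    rw [hw]; simp
  have hBx : x * (1 - x) * (50 * (((k:F)+1) * (((k:F)+2) * u.eval x))) = 0 := by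
    have := congrArg (Polynomial.eval x) hBzero
    simp only [hB, eval_add, eval_sub, eval_mul, eval_pow, eval_C, eval_X, eval_one,
      eval_zero, sub_self, zero_mul, mul_zero, zero_pow, hwx, hvx] at this
    linear_combination this
  have hk1 : ((k:F) + 1) ≠ 0 := by
    have : ((k+1 : ℕ) : F) ≠ 0 := hcast (k+1) (by omega) (by omega)
    push_cast at this
    exact this
  have hk2 : ((k:F) + 2) ≠ 0 := by
    have : ((k+2 : ℕ) : F) ≠ 0 := hcast (k+2) (by omega) (by omega)
    push_cast at this
    exact this
  have hx01 : x * (1 - x) = 0 := by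
    rcases mul_eq_zero.mp hBx with h | h
    · exact h
    · exact absurd h (by
        exact mul_ne_zero h50F (mul_ne_zero hk1 (mul_ne_zero hk2 hux)))
  have hroot : Gm.IsRoot x := (Polynomial.rootMultiplicity_pos hGm0).mp (by omega)
  rcases mul_eq_zero.mp hx01 with hx0 | hx1
  · -- x = 0 : contradiction with G(0) = 1
    subst hx0
    have : Gm.eval 0 = 1 := by rw [← Polynomial.coeff_zero_eq_eval_zero, hG0coeff]
    rw [Polynomial.IsRoot] at hroot
    rw [this] at hroot
    exact one_ne_zero hroot
  · -- x = 1
    have hx1' : x = 1 := (sub_eq_zero.mp hx1).symm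
    subst hx1'
    set B2 : Polynomial F := -(X * (C 50 * w)) + (C 55 - C 115 * X) * v
        - C 21 * ((X - C 1) * u) with hB2
    have hBfac : B = (X - C 1) * B2 := by
      rw [hB, hB2]
      simp only [Polynomial.C_1]
      ring
    have hB20 : B2 = 0 := by
      rcases mul_eq_zero.mp (hBfac ▸ hBzero) with h | h
      · exact absurd h hXc
      · exact h
    have hev : -(50 * (((k:F)+1) * (((k:F)+2) * u.eval 1))) + (55 - 115) * (((k:F)+2) * u.eval 1) = 0 := by
      have := congrArg (Polynomial.eval 1) hB20
      simp only [hB2, eval_add, eval_sub, eval_mul, eval_neg, eval_C, eval_X, eval_one,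
        Polynomial.eval_zero, sub_self, zero_mul, mul_zero, hwx, hvx] at this
      linear_combination this
    have hzero : ((50 * k + 110 : ℕ) : F) * (((k:F)+2) * u.eval 1) = 0 := by
      rw [Nat.cast_add, Nat.cast_mul]
      push_cast
      linear_combination -hev
    have hne : (((k:F)+2) * u.eval 1) ≠ 0 := mul_ne_zero hk2 hux
    have hcast0 : ((50 * k + 110 : ℕ) : F) = 0 := by
      rcases mul_eq_zero.mp hzero with h | h
      · exact h
      · exact absurd h hne
    have hK0 : ((50 * k + 110 : ℕ) : ZMod p) = 0 := by
      apply hφinj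
      rw [map_natCast, map_zero]
      exact hcast0
    rw [ZMod.natCast_eq_zero_iff] at hK0
    have hdvd : p ∣ 5 * k + 11 := by
      have h10 : 50 * k + 110 = 10 * (5 * k + 11) := by ring
      rw [h10] at hK0
      rcases (Nat.Prime.dvd_mul hpp).mp hK0 with h | h
      · have := Nat.le_of_dvd (by norm_num) h; omega
      · exact h
    obtain ⟨t, ht⟩ := hdvd
    have ht2 : t < 2 := by
      by_contra hge
      push_neg at hge
      have := Nat.mul_le_mul_left p hge
      omega
    interval_cases t <;> omega
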